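/- Let n ≥ 2, let k₀, k₁, …, kₙ ∈ ℤ satisfy k₁ + ⋯ + kₙ = 0, and let μ₀, μ₁, …, μₙ ∈ ℝ be arbitrary. Then the n-fold application of the rotation map ρ to the tuple (k₀, k₁, …, kₙ; μ₀, μ₁, …, μₙ) returns the original tuple; that is, ρⁿ is the identity on such tuples. -/

import Mathlib

open Finset

/-- The rotated charges: `k̃₀ = k₀ + k₁`, `k̃ⱼ = k_{j+1}` for `1 ≤ j ≤ n-1`, `k̃ₙ = k₁`. -/
def rotK (n : ℕ) (k : ℕ → ℤ) : ℕ → ℤ :=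
  fun j => if j = 0 then k 0 + k 1 else if j = n then k 1 else k (j + 1)

/-- The rotated masses: `μ̃ⱼ = μ₀/n + μ_{j+1}` for `1 ≤ j ≤ n-1`, `μ̃ₙ = μ₁ - (n-1)μ₀/n`;
`μ₀` is unchanged. -/
noncomputable def rotMu (n : ℕ) (μ₀ : ℝ) (μ : ℕ → ℝ) : ℕ → ℝ :=
  fun j => if j = n then μ 1 - ((n : ℝ) - 1) * μ₀ / n else μ₀ / n + μ (j + 1)

/-- The rotation map on tuples `(k₀,…,kₙ; μ₁,…,μₙ)` (with `μ₀` a fixed parameter). -/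
noncomputable def rot (n : ℕ) (μ₀ : ℝ) (p : (ℕ → ℤ) × (ℕ → ℝ)) : (ℕ → ℤ) × (ℕ → ℝ) :=
  (rotK n p.1, rotMu n μ₀ p.2)

/-- Closed form for the `m`-th iterate of the rotation map, `m ≤ n`. -/
lemma rot_iter_formula (n : ℕ) (hn : 2 ≤ n) (k : ℕ → ℤ) (μ₀ : ℝ) (μ : ℕ → ℝ) :
    ∀ m, m ≤ n →
      (((rot n μ₀)^[m] (k, μ)).1 0 = k 0 + ∑ j ∈ Icc 1 m, k j) ∧
      (∀ j, 1 ≤ j → j + m ≤ n → ((rot n μ₀)^[m] (k, μ)).1 j = k (j + m)) ∧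
      (∀ j, j ≤ n → n < j + m → ((rot n μ₀)^[m] (k, μ)).1 j = k (j + m - n)) ∧
      (∀ j, 1 ≤ j → j + m ≤ n →
        ((rot n μ₀)^[m] (k, μ)).2 j = m * μ₀ / n + μ (j + m)) ∧
      (∀ j, j ≤ n → n < j + m →
        ((rot n μ₀)^[m] (k, μ)).2 j = m * μ₀ / n + μ (j + m - n) - μ₀) := by
  have hn0 : (n : ℝ) ≠ 0 := Nat.cast_ne_zero.mpr (by omega)
  intro m
  induction m with
  | zero =>
    intro _
    exact ⟨by simp, by simp, fun j hj hj2 => absurd hj2 (by omega),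
      by intro j hj hj2; simp, fun j hj hj2 => absurd hj2 (by omega)⟩
  | succ m ih =>
    intro hm
    obtain ⟨ih0, ih1, ih2, ih3, ih4⟩ := ih (by omega)
    rw [Function.iterate_succ_apply']
    set p := (rot n μ₀)^[m] (k, μ) with hp
    refine ⟨?_, ?_, ?_, ?_, ?_⟩
    · show rotK n p.1 0 = _
      have e : rotK n p.1 0 = p.1 0 + p.1 1 := by simp [rotK]
      rw [e, ih0, ih1 1 le_rfl (by omega), Nat.add_comm 1 m,
        Finset.sum_Icc_succ_top (by omega : 1 ≤ m + 1), add_assoc]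
    · intro j hj hjm
      show rotK n p.1 j = _
      rw [rotK]
      rw [if_neg (by omega), if_neg (by omega), ih1 (j + 1) (by omega) (by omega)]
      congr 1; omega
    · intro j hj hjm
      show rotK n p.1 j = _
      rw [rotK]
      by_cases hjn : j = n
      · subst hjn
        rw [if_neg (by omega), if_pos rfl, ih1 1 le_rfl (by omega)]
        congr 1; omega
      · rw [if_neg (by omega), if_neg hjn, ih2 (j + 1) (by omega) (by omega)]
        congr 1; omega
    · intro j hj hjm
      show rotMu n μ₀ p.2 j = _
      rw [rotMu]
      rw [if_neg (by omega), ih3 (j + 1) (by omega) (by omega)]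
      have : j + 1 + m = j + (m + 1) := by omega
      rw [this]
      push_cast
      ring
    · intro j hj hjm
      show rotMu n μ₀ p.2 j = _
      rw [rotMu]
      by_cases hjn : j = n
      · subst hjn
        rw [if_pos rfl, ih3 1 le_rfl (by omega)]
        have h2 : j + (m + 1) - j = 1 + m := by omega
        rw [h2]
        push_cast
        field_simp
        ring
      · rw [if_neg hjn, ih4 (j + 1) (by omega) (by omega)]
        have : j + 1 + m - n = j + (m + 1) - n := by omega
        rw [this]
        push_cast
        ring

/-- If `k₁ + ⋯ + kₙ = 0` then the `n`-fold application of the rotation map returns the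
original tuple `(k₀,…,kₙ; μ₀, μ₁,…,μₙ)`, i.e. `ρⁿ` is the identity on such tuples
(`μ₀` is unchanged by every rotation). -/
theorem rotation_pow_n_eq_id
    (n : ℕ) (hn : 2 ≤ n) (k : ℕ → ℤ) (μ₀ : ℝ) (μ : ℕ → ℝ)
    (h1 : ∑ j ∈ Icc 1 n, k j = 0) :
    (∀ j, j ≤ n → ((rot n μ₀)^[n] (k, μ)).1 j = k j) ∧
    (∀ j, 1 ≤ j → j ≤ n → ((rot n μ₀)^[n] (k, μ)).2 j = μ j) := by
  have hn0 : (n : ℝ) ≠ 0 := Nat.cast_ne_zero.mpr (by omega)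
  obtain ⟨h0, _, h2, _, h4⟩ := rot_iter_formula n hn k μ₀ μ n le_rfl
  constructor
  · intro j hj
    rcases Nat.eq_zero_or_pos j with hj0 | hj0
    · subst hj0; rw [h0, h1]; ring
    · rw [h2 j hj (by omega)]
      congr 1; omega
  · intro j hj1 hj2
    rw [h4 j hj2 (by omega)]
    have : j + n - n = j := by omega
    rw [this]
    field_simp
    ring
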